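/- For every integer d ≥ 1, the number of residue classes x modulo 2d satisfying x² ≡ 1 (mod 4d) is exactly 2^{ρ(d)}, where ρ(d) is the number of distinct prime divisors of d. (Note that for x ∈ ℤ/2dℤ the residue of x² modulo 4d is well defined.) -/

import Mathlib

private noncomputable def RR (n : ℕ) : ℕ := Nat.card {y : ZMod n // y ^ 2 = 1}

private lemma sq_eq_one_iff_int (n : ℕ) [NeZero n] (y : ZMod n) :
    y ^ 2 = 1 ↔ (n : ℤ) ∣ ((y.val : ℤ) ^ 2 - 1) := by
  have hy : ((y.val : ℕ) : ZMod n) = y := ZMod.natCast_rightInverse y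
  rw [← ZMod.intCast_zmod_eq_zero_iff_dvd, ← sub_eq_zero (a := y ^ 2)]
  constructor <;> intro h
  · rw [← h]; push_cast; rw [hy]
  · rw [← hy]; have := h; push_cast at this ⊢; exact this




private lemma RR_mul (m n : ℕ) (h : m.Coprime n) : RR (m * n) = RR m * RR n := by
  unfold RR
  rw [← Nat.card_prod]
  apply Nat.card_congr
  refine ((ZMod.chineseRemainder h).toEquiv.subtypeEquiv
      (q := fun z : ZMod m × ZMod n => z ^ 2 = 1) ?_).trans
    ((Equiv.subtypeEquivRight (q := fun z => z.1 ^ 2 = 1 ∧ z.2 ^ 2 = 1) ?_).trans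
      (Equiv.subtypeProdEquivProd (p := fun a : ZMod m => a ^ 2 = 1) (q := fun b : ZMod n => b ^ 2 = 1)))
  · intro y
    show y ^ 2 = 1 ↔ (ZMod.chineseRemainder h) y ^ 2 = 1
    rw [← map_pow]
    exact ⟨fun hy => by rw [hy, map_one], fun hy => by
      have := congrArg (ZMod.chineseRemainder h).symm hy
      simpa using this⟩
  · intro z
    rw [Prod.ext_iff]
    rfl



private lemma card_pm_one (n : ℕ) (hn : 2 < n) :
    Nat.card {y : ZMod n // y = 1 ∨ y = -1} = 2 := by
  have : Fact (2 < n) := ⟨hn⟩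
  have h1 : (1 : ZMod n) ≠ -1 := by
    intro h
    exact (ZMod.neg_one_ne_one (n := n)) h.symm
  have : {y : ZMod n // y = 1 ∨ y = -1} = ({1, -1} : Set (ZMod n)) := rfl
  rw [this, Nat.card_coe_set_eq, Set.ncard_pair h1]

private lemma RR_odd_prime_pow (p k : ℕ) (hp : p.Prime) (hodd : p ≠ 2) (hk : 1 ≤ k) :
    RR (p ^ k) = 2 := by
  have hpk : 1 < p ^ k := Nat.one_lt_pow (by omega) hp.one_lt
  have : NeZero (p ^ k) := ⟨by omega⟩
  have key : ∀ y : ZMod (p ^ k), y ^ 2 = 1 ↔ (y = 1 ∨ y = -1) := by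
    intro y
    constructor
    · intro hy
      rw [sq_eq_one_iff_int] at hy
      have hfac : ((y.val : ℤ) ^ 2 - 1) = ((y.val : ℤ) - 1) * ((y.val : ℤ) + 1) := by ring
      rw [hfac] at hy
      push_cast at hy
      have hprime : Prime (p : ℤ) := Int.prime_iff_natAbs_prime.mpr (by simpa using hp)
      have hcases : ¬ ((p : ℤ) ∣ ((y.val : ℤ) - 1)) ∨ ¬ ((p : ℤ) ∣ ((y.val : ℤ) + 1)) := by
        by_contra hc
        push_neg at hc
        obtain ⟨h1, h2⟩ := hc
        have : (p : ℤ) ∣ 2 := by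
          have := dvd_sub h2 h1
          simpa using this
        have := Int.le_of_dvd (by norm_num) this
        have := hp.two_le
        omega
      rcases hcases with hnd | hnd
      · right
        have hcop : IsCoprime ((p : ℤ) ^ k) ((y.val : ℤ) - 1) :=
          (IsCoprime.pow_left ((hprime.coprime_iff_not_dvd).mpr hnd))
        have : ((p : ℤ) ^ k) ∣ ((y.val : ℤ) + 1) := hcop.dvd_of_dvd_mul_left hy
        have : (((y.val : ℤ) + 1 : ℤ) : ZMod (p ^ k)) = 0 := by
          rw [ZMod.intCast_zmod_eq_zero_iff_dvd]; push_cast; exact_mod_cast this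
        have hy1 : ((y.val : ℕ) : ZMod (p ^ k)) = y := ZMod.natCast_rightInverse y
        push_cast at this
        rw [hy1] at this
        linear_combination this
      · left
        have hcop : IsCoprime ((p : ℤ) ^ k) ((y.val : ℤ) + 1) :=
          (IsCoprime.pow_left ((hprime.coprime_iff_not_dvd).mpr hnd))
        have : ((p : ℤ) ^ k) ∣ ((y.val : ℤ) - 1) := hcop.dvd_of_dvd_mul_right hy
        have : (((y.val : ℤ) - 1 : ℤ) : ZMod (p ^ k)) = 0 := by
          rw [ZMod.intCast_zmod_eq_zero_iff_dvd]; push_cast; exact_mod_cast this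
        have hy1 : ((y.val : ℕ) : ZMod (p ^ k)) = y := ZMod.natCast_rightInverse y
        push_cast at this
        rw [hy1] at this
        linear_combination this
    · rintro (rfl | rfl) <;> ring
  unfold RR
  have := Nat.card_congr (Equiv.subtypeEquivRight key)
  rw [this]
  apply card_pm_one
  have : 2 < p := by rcases hp.two_le.lt_or_eq with h | h; exact h; omega
  calc 2 < p := this
    _ ≤ p ^ k := Nat.le_self_pow (by omega) p



private lemma RR_two_pow (k : ℕ) (hk : 3 ≤ k) : RR (2 ^ k) = 4 := by
  obtain ⟨j, rfl⟩ : ∃ j, k = j + 3 := ⟨k - 3, by omega⟩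
  have hNpos : 0 < 2 ^ (j + 3) := by positivity
  have : NeZero (2 ^ (j + 3)) := ⟨by omega⟩
  set c : ZMod (2 ^ (j + 3)) := ((2 ^ (j + 2) : ℕ) : ZMod (2 ^ (j + 3))) with hc
  have hc2 : c ^ 2 = 0 := by
    rw [hc, ← Nat.cast_pow, ZMod.natCast_eq_zero_iff, ← pow_mul]
    exact pow_dvd_pow 2 (by omega)
  have h2c : 2 * c = 0 := by
    have : (2 : ZMod (2 ^ (j + 3))) * c = ((2 ^ (j + 3) : ℕ) : ZMod (2 ^ (j + 3))) := by
      rw [hc]; push_cast; ring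
    rw [this, ZMod.natCast_self]
  -- helper for distinctness
  have hP4 : (4 : ℤ) ≤ 2 ^ (j + 2) := by
    calc (4 : ℤ) = 2 ^ 2 := by norm_num
    _ ≤ 2 ^ (j + 2) := pow_le_pow_right₀ (by norm_num) (by omega)
  have hPP : (2 : ℤ) ^ (j + 3) = 2 * 2 ^ (j + 2) := by ring
  have hne : ∀ d : ℤ, 0 < d → d < 2 ^ (j + 3) → ¬ (((2 ^ (j + 3) : ℕ) : ℤ) ∣ d) := by
    intro d hd0 hdb hdvd
    push_cast at hdvd
    have := Int.le_of_dvd hd0 hdvd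
    omega
  -- distinctness facts
  have e1 : (1 : ZMod (2 ^ (j + 3))) ≠ -1 := by
    intro h
    apply hne (2) (by norm_num) (by omega)
    rw [← ZMod.intCast_zmod_eq_zero_iff_dvd]
    try rw [hc] at h
    push_cast at h ⊢
    linear_combination h
  have e2 : (1 : ZMod (2 ^ (j + 3))) ≠ c - 1 := by
    intro h
    apply hne (2 ^ (j + 2) - 2) (by omega) (by omega)
    rw [← ZMod.intCast_zmod_eq_zero_iff_dvd]
    try rw [hc] at h
    push_cast at h ⊢
    linear_combination -h
  have e3 : (1 : ZMod (2 ^ (j + 3))) ≠ c + 1 := by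
    intro h
    apply hne (2 ^ (j + 2)) (by omega) (by omega)
    rw [← ZMod.intCast_zmod_eq_zero_iff_dvd]
    try rw [hc] at h
    push_cast at h ⊢
    linear_combination -h
  have e4 : (-1 : ZMod (2 ^ (j + 3))) ≠ c - 1 := by
    intro h
    apply hne (2 ^ (j + 2)) (by omega) (by omega)
    rw [← ZMod.intCast_zmod_eq_zero_iff_dvd]
    try rw [hc] at h
    push_cast at h ⊢
    linear_combination -h
  have e5 : (-1 : ZMod (2 ^ (j + 3))) ≠ c + 1 := by
    intro h
    apply hne (2 ^ (j + 2) + 2) (by omega) (by omega)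
    rw [← ZMod.intCast_zmod_eq_zero_iff_dvd]
    try rw [hc] at h
    push_cast at h ⊢
    linear_combination -h
  have e6 : c - 1 ≠ c + 1 := by
    intro h
    apply hne (2) (by norm_num) (by omega)
    rw [← ZMod.intCast_zmod_eq_zero_iff_dvd]
    try rw [hc] at h
    push_cast at h ⊢
    linear_combination -h
  have hN0 : (2 : ZMod (2 ^ (j + 3))) ^ (j + 3) = 0 := by
    have := ZMod.natCast_self (2 ^ (j + 3))
    push_cast at this
    exact this
  have key : ∀ y : ZMod (2 ^ (j + 3)),
      y ^ 2 = 1 ↔ (y = 1 ∨ y = -1 ∨ y = c - 1 ∨ y = c + 1) := by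
    intro y
    constructor
    · intro hy
      rw [sq_eq_one_iff_int] at hy
      push_cast at hy
      set v : ℤ := (y.val : ℤ) with hv
      have hyv : ((v : ℤ) : ZMod (2 ^ (j + 3))) = y := by
        rw [hv]; push_cast; exact ZMod.natCast_rightInverse y
      have hodd : Odd v := by
        rcases Int.even_or_odd v with he | ho
        · exfalso
          obtain ⟨t, ht⟩ := he
          have h2 : (2 : ℤ) ∣ v ^ 2 - 1 :=
            dvd_trans ⟨2 ^ (j + 2), hPP⟩ hy
          obtain ⟨w, hw⟩ := h2
          have h1 : v ^ 2 = 4 * t ^ 2 := by rw [ht]; ring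
          obtain ⟨a, ha⟩ : ∃ a, t ^ 2 = a := ⟨_, rfl⟩
          rw [ha] at h1
          omega
        · exact ho
      obtain ⟨s, hs⟩ := hodd
      have hcancel : (2 : ℤ) ^ (j + 1) ∣ s * (s + 1) := by
        have h4 : (4 : ℤ) * 2 ^ (j + 1) ∣ 4 * (s * (s + 1)) := by
          have : v ^ 2 - 1 = 4 * (s * (s + 1)) := by rw [hs]; ring
          rw [← this]
          convert hy using 2
          ring
        exact (mul_dvd_mul_iff_left (by norm_num : (4:ℤ) ≠ 0)).mp h4
      have hprime2 : Prime (2 : ℤ) := Int.prime_two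
      rcases Int.even_or_odd s with ⟨t, ht⟩ | ⟨t, ht⟩
      · -- s even, so 2^(j+1) ∣ s
        have hnd : ¬ (2 : ℤ) ∣ (s + 1) := by omega
        have hcop : IsCoprime ((2:ℤ) ^ (j + 1)) (s + 1) :=
          IsCoprime.pow_left ((hprime2.coprime_iff_not_dvd).mpr hnd)
        obtain ⟨m, hm⟩ := hcop.dvd_of_dvd_mul_right hcancel
        rcases Int.even_or_odd m with ⟨u, hu⟩ | ⟨u, hu⟩
        · left
          rw [← hyv]
          have hveq : v = 2 ^ (j + 3) * u + 1 := by rw [hs, hm, hu]; ring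
          rw [hveq]
          push_cast
          linear_combination (u : ZMod (2 ^ (j + 3))) * hN0
        · right; right; right
          rw [← hyv]
          have hveq : v = 2 ^ (j + 3) * u + 2 ^ (j + 2) + 1 := by rw [hs, hm, hu]; ring
          rw [hveq, hc]
          push_cast
          linear_combination (u : ZMod (2 ^ (j + 3))) * hN0
      · -- s odd, so 2^(j+1) ∣ s + 1
        have hnd : ¬ (2 : ℤ) ∣ s := by omega
        have hcop : IsCoprime ((2:ℤ) ^ (j + 1)) s :=
          IsCoprime.pow_left ((hprime2.coprime_iff_not_dvd).mpr hnd)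
        obtain ⟨m, hm⟩ := hcop.dvd_of_dvd_mul_left hcancel
        rcases Int.even_or_odd m with ⟨u, hu⟩ | ⟨u, hu⟩
        · right; left
          rw [← hyv]
          have hveq : v = 2 ^ (j + 3) * u - 1 := by
            have : s = 2 ^ (j + 1) * m - 1 := by omega
            rw [hs, this, hu]; ring
          rw [hveq]
          push_cast
          linear_combination (u : ZMod (2 ^ (j + 3))) * hN0
        · right; right; left
          rw [← hyv]
          have hveq : v = 2 ^ (j + 3) * u + 2 ^ (j + 2) - 1 := by
            have : s = 2 ^ (j + 1) * m - 1 := by omega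
            rw [hs, this, hu]; ring
          rw [hveq, hc]
          push_cast
          linear_combination (u : ZMod (2 ^ (j + 3))) * hN0
    · rintro (rfl | rfl | rfl | rfl)
      · rw [one_pow]
      · rw [neg_one_sq]
      · linear_combination hc2 - h2c
      · linear_combination hc2 + h2c
  unfold RR
  rw [Nat.card_congr (Equiv.subtypeEquivRight key)]
  have hset : {y : ZMod (2 ^ (j + 3)) // y = 1 ∨ y = -1 ∨ y = c - 1 ∨ y = c + 1} =
      ({1, -1, c - 1, c + 1} : Set (ZMod (2 ^ (j + 3)))) := rfl
  rw [hset, Nat.card_coe_set_eq]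
  rw [Set.ncard_insert_of_notMem (by
        simp only [Set.mem_insert_iff, Set.mem_singleton_iff]
        push_neg
        exact ⟨e1, e2, e3⟩),
      Set.ncard_insert_of_notMem (by
        simp only [Set.mem_insert_iff, Set.mem_singleton_iff]
        push_neg
        exact ⟨e4, e5⟩),
      Set.ncard_insert_of_notMem (by
        simp only [Set.mem_singleton_iff]
        exact e6),
      Set.ncard_singleton]



private lemma RR_four_d (d : ℕ) (hd : 1 ≤ d) :
    RR (4 * d) = 2 * Nat.card {x : ZMod (2 * d) // (4 * (d : ℤ)) ∣ ((x.val : ℤ) ^ 2 - 1)} := by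
  have h2d : NeZero (2 * d) := ⟨by omega⟩
  have h4d : NeZero (4 * d) := ⟨by omega⟩
  have hdd : (4 : ZMod (4 * d)) * ((d : ℕ) : ZMod (4 * d)) = 0 := by
    have := ZMod.natCast_self (4 * d)
    push_cast at this
    exact this
  set E : ZMod (4 * d) := ((2 * d : ℕ) : ZMod (4 * d)) with hE
  have hE2 : E ^ 2 = 0 := by
    rw [hE]; push_cast
    linear_combination ((d : ZMod (4 * d))) * hdd
  have h2E : 2 * E = 0 := by
    rw [hE]; push_cast
    linear_combination hdd
  set S := {x : ZMod (2 * d) // (4 * (d : ℤ)) ∣ ((x.val : ℤ) ^ 2 - 1)} with hS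
  have hmem : ∀ x : S, ∀ b : Bool,
      (((x.1.val : ℕ) : ZMod (4 * d)) + (if b then E else 0)) ^ 2 = 1 := by
    rintro ⟨x, hx⟩ b
    have hA : (((x.val : ℕ) : ZMod (4 * d))) ^ 2 = 1 := by
      rw [← sub_eq_zero]
      have : ((((x.val : ℤ) ^ 2 - 1 : ℤ)) : ZMod (4 * d)) = 0 := by
        rw [ZMod.intCast_zmod_eq_zero_iff_dvd]
        exact_mod_cast hx
      push_cast at this ⊢
      convert this using 1
    cases b
    · simpa using hA
    · simp only [if_true]
      linear_combination hA + (((x.val : ℕ) : ZMod (4 * d))) * h2E + hE2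
  let f : S × Bool → {y : ZMod (4 * d) // y ^ 2 = 1} :=
    fun z => ⟨((z.1.1.val : ℕ) : ZMod (4 * d)) + (if z.2 then E else 0), hmem z.1 z.2⟩
  have hbij : Function.Bijective f := by
    constructor
    · rintro ⟨⟨x, hx⟩, b⟩ ⟨⟨x', hx'⟩, b'⟩ heq
      have heq' : ((x.val : ℕ) : ZMod (4 * d)) + (if b then E else 0)
          = ((x'.val : ℕ) : ZMod (4 * d)) + (if b' then E else 0) :=
        congrArg Subtype.val heq
      have hdvd : (2 * d) ∣ (4 * d) := ⟨2, by ring⟩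
      have hcast := congrArg (ZMod.castHom hdvd (ZMod (2 * d))) heq'
      have hE0 : (ZMod.castHom hdvd (ZMod (2 * d))) E = 0 := by
        rw [hE, map_natCast, ZMod.natCast_self]
      have hxx : x = x' := by
        have h1 : ∀ xx : ZMod (2 * d) , (ZMod.castHom hdvd (ZMod (2 * d)))
            (((xx.val : ℕ) : ZMod (4 * d))) = xx := by
          intro xx
          rw [map_natCast]
          exact ZMod.natCast_rightInverse xx
        rw [map_add, map_add, h1, h1] at hcast
        cases b <;> cases b' <;>
          simpa [hE0] using hcast
      subst hxx
      have hbb : b = b' := by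
        by_contra hne
        have hEne : E ≠ 0 := by
          rw [hE, Ne, ZMod.natCast_eq_zero_iff]
          intro hdvd2
          have := Nat.le_of_dvd (by omega) hdvd2
          omega
        have := add_left_cancel heq'
        cases b <;> cases b' <;> simp_all
      subst hbb
      rfl
    · rintro ⟨y, hy⟩
      have hyd : (4 * (d : ℤ)) ∣ ((y.val : ℤ) ^ 2 - 1) := by
        rw [sq_eq_one_iff_int] at hy
        exact_mod_cast hy
      set r : ℕ := y.val % (2 * d) with hr
      set q : ℕ := y.val / (2 * d) with hq
      have hy_eq : 2 * d * q + r = y.val := Nat.div_add_mod y.val (2 * d)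
      have hrlt : r < 2 * d := Nat.mod_lt _ (by omega)
      have hylt : y.val < 4 * d := ZMod.val_lt y
      have hqle : q = 0 ∨ q = 1 := by
        rcases Nat.lt_or_ge y.val (2 * d) with h | h
        · left; rw [hq]; exact Nat.div_eq_of_lt h
        · right
          have h1 : 1 ≤ q := by
            rw [hq]; exact (Nat.one_le_div_iff (by omega)).mpr h
          have h2 : q < 2 := by
            rw [hq]; exact Nat.div_lt_of_lt_mul (by omega)
          omega
      set x : ZMod (2 * d) := ((y.val : ℕ) : ZMod (2 * d)) with hx
      have hxval : x.val = r := by rw [hx, ZMod.val_natCast]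
      have hxmem : (4 * (d : ℤ)) ∣ ((x.val : ℤ) ^ 2 - 1) := by
        rw [hxval]
        obtain ⟨w, hw⟩ := hyd
        refine ⟨w - (q * r + d * q ^ 2), ?_⟩
        have hz : (y.val : ℤ) = 2 * d * q + r := by exact_mod_cast hy_eq.symm
        have : ((y.val : ℤ) ^ 2 - 1) = 4 * (d : ℤ) * w := hw
        rw [hz] at this
        linear_combination this
      have hyy : ((y.val : ℕ) : ZMod (4 * d)) = y := ZMod.natCast_rightInverse y
      rcases hqle with hq0 | hq1
      · refine ⟨⟨⟨x, hxmem⟩, false⟩, ?_⟩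
        apply Subtype.ext
        show ((x.val : ℕ) : ZMod (4 * d)) + (if false then E else 0) = y
        rw [hxval, if_neg (by simp), add_zero, ← hyy]
        congr 1
        rw [hq0] at hy_eq
        omega
      · refine ⟨⟨⟨x, hxmem⟩, true⟩, ?_⟩
        apply Subtype.ext
        show ((x.val : ℕ) : ZMod (4 * d)) + (if true then E else 0) = y
        rw [hxval, if_pos rfl, hE, ← hyy, ← Nat.cast_add]
        congr 1
        rw [hq1] at hy_eq
        omega
  unfold RR
  rw [← Nat.card_congr (Equiv.ofBijective f hbij), Nat.card_prod, Nat.card_eq_fintype_card (α := Bool)]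
  simp [mul_comm]



private lemma RR_one : RR 1 = 1 := by
  unfold RR; rw [Nat.card_eq_fintype_card]; decide

private lemma RR_four : RR (2 ^ 2) = 2 := by
  unfold RR; rw [Nat.card_eq_fintype_card]; decide

private lemma RR_odd : ∀ n : ℕ, Odd n → RR n = 2 ^ n.primeFactors.card := by
  intro n
  induction n using Nat.recOnPosPrimePosCoprime with
  | prime_pow p k hpp hk =>
    intro hodd
    have hp' : p.Prime := hpp
    have hne2 : p ≠ 2 := by
      rintro rfl
      rw [Nat.odd_iff] at hodd
      have : (2 : ℕ) ∣ 2 ^ k := dvd_pow_self 2 hk.ne'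
      omega
    rw [RR_odd_prime_pow p k hp' hne2 hk, Nat.primeFactors_prime_pow hk.ne' hpp]
    simp
  | zero => intro hodd; simp [Nat.odd_iff] at hodd
  | one => intro _; simpa using RR_one
  | coprime a b ha hb hab iha ihb =>
    intro hodd
    obtain ⟨ha1, hb1⟩ := (Nat.odd_mul).mp hodd
    rw [RR_mul a b hab, iha ha1, ihb hb1, ← pow_add]
    congr 1
    rw [Nat.primeFactors_mul (by omega) (by omega),
      Finset.card_union_of_disjoint (Nat.Coprime.disjoint_primeFactors hab)]

/-- For every integer `d ≥ 1`, the number of residue classes `x`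
modulo `2d` with `x² ≡ 1 (mod 4d)` is exactly `2^{ρ(d)}`, where `ρ(d)` is the number of
distinct prime divisors of `d`.  (The condition is tested on the canonical
representative `x.val`; it is independent of the choice of representative.) -/
theorem card_square_roots_of_one_mod_four_d (d : ℕ) (hd : 1 ≤ d) :
    Nat.card {x : ZMod (2 * d) // (4 * (d : ℤ)) ∣ ((x.val : ℤ) ^ 2 - 1)} =
      2 ^ d.primeFactors.card := by
  set a := d.factorization 2 with ha
  set m := d / 2 ^ a with hm
  have hdm : 2 ^ a * m = d := Nat.ordProj_mul_ordCompl_eq_self d 2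
  have hm_pos : 0 < m := Nat.ordCompl_pos 2 (by omega)
  have hm_ndvd : ¬ 2 ∣ m := Nat.not_dvd_ordCompl Nat.prime_two (by omega)
  have hm_odd : Odd m := Nat.odd_iff.mpr (by omega)
  have hcop : Nat.Coprime (2 ^ (a + 2)) m :=
    Nat.Coprime.pow_left _ ((Nat.prime_two.coprime_iff_not_dvd).mpr hm_ndvd)
  have h4d : 4 * d = 2 ^ (a + 2) * m := by rw [← hdm]; ring
  have key := RR_four_d d hd
  rw [h4d, RR_mul _ _ hcop, RR_odd m hm_odd] at key
  rcases Nat.eq_zero_or_pos a with ha0 | hapos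
  · have hdm' : m = d := by rw [ha0] at hdm; simpa using hdm
    rw [ha0, RR_four, hdm'] at key
    omega
  · rw [RR_two_pow (a + 2) (by omega)] at key
    have hωd : d.primeFactors.card = m.primeFactors.card + 1 := by
      rw [← hdm, Nat.primeFactors_mul (by positivity) (by omega),
        Nat.primeFactors_prime_pow (by omega) Nat.prime_two,
        Finset.card_union_of_disjoint (by
          simp only [Finset.disjoint_singleton_left, Nat.mem_primeFactors]
          tauto),
        Finset.card_singleton]
      omega
    rw [hωd, pow_succ]
    omega
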